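/- Let (D,K,T) be an MD-RSPP instance such that every commodity (s,t) ∈ K satisfies s ≠ t and t is reachable from s by a directed path in D. If T is at least the maximum outdegree of D, or if T is at least the maximum, over all vertices v of D, of the number of commodities in K whose source is v, then (D,K,T) is a YES-instance of MD-RSPP. -/

import Mathlib

open Relation

variable {V : Type*} [DecidableEq V]

/-- The adjacency relation of a digraph given by its edge set. -/
def Adj (E : Finset (V × V)) : V → V → Prop := fun a b => (a, b) ∈ E

/-- `D` is a digraph: no self-loops (no parallel edges since edges form a set). -/
def IsDigraph (D : Finset (V × V)) : Prop := ∀ e ∈ D, e.1 ≠ e.2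

/-- `l` is a directed `s`-`t`-path w.r.t. the adjacency relation `A`:
a nonempty duplicate-free list of vertices, consecutive ones adjacent,
starting at `s` and ending at `t`. -/
def DiPath (A : V → V → Prop) (s t : V) (l : List V) : Prop :=
  l.Chain' A ∧ l.Nodup ∧ l.head? = some s ∧ l.getLast? = some t

/-- Adjacency in the transitive closure `T(D)` of the digraph with edge set `E`:
`(u,v)` is an edge iff `u ≠ v` and `v` is reachable from `u` in `E`. -/
def TCAdj (E : Finset (V × V)) (u v : V) : Prop :=
  u ≠ v ∧ Relation.ReflTransGen (Adj E) u v

/-- The outdegree of `v` in the digraph with edge set `H`. -/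
def outDeg (H : Finset (V × V)) (v : V) : ℕ :=
  (H.filter fun e => e.1 = v).card

/-- The list of (directed) edges traversed by a list of vertices. -/
def listEdges (l : List V) : List (V × V) := l.zip l.tail

/-- `H` is a solution graph of the MD-RSPP instance `(D,K,T)`: a subgraph of
`T(D)` of maximum outdegree at most `T` containing a directed `s`-`t`-path for
every commodity `(s,t) ∈ K`. -/
def RSPPSolution (D K : Finset (V × V)) (T : ℕ) (H : Finset (V × V)) : Prop :=
  (∀ e ∈ H, TCAdj D e.1 e.2) ∧ (∀ v, outDeg H v ≤ T) ∧
  (∀ k ∈ K, ∃ l, DiPath (Adj H) k.1 k.2 l)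

/-- If every commodity `(s,t) ∈ K` satisfies `s ≠ t` and `t` is
reachable from `s` in `D`, and `T` is at least the maximum outdegree of `D` or
at least the maximum number of commodities sharing a source, then `(D,K,T)` is
a YES-instance of MD-RSPP. -/

lemma exists_nodup_chain {V : Type*} {A : V → V → Prop} {s t : V}
    (h : Relation.ReflTransGen A s t) :
    ∃ l : List V, l.Chain' A ∧ l.Nodup ∧ l.head? = some s ∧ l.getLast? = some t := by
  induction h using Relation.ReflTransGen.head_induction_on with
  | refl => exact ⟨[t], by simp [List.Chain'], by simp, rfl, rfl⟩
  | head hab _ ih =>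
    rename_i a b _
    obtain ⟨l, hc, hn, hh, hl⟩ := ih
    by_cases hmem : a ∈ l
    · obtain ⟨l1, l2, rfl⟩ := List.append_of_mem hmem
      refine ⟨a :: l2, ?_, ?_, rfl, ?_⟩
      · exact ((List.isChain_append.mp hc).2.1)
      · exact (List.Nodup.sublist (List.sublist_append_right l1 (a :: l2)) hn)
      · rw [← hl, List.getLast?_append_of_ne_nil] ; simp
    · refine ⟨a :: l, ?_, ?_, rfl, ?_⟩
      · refine List.isChain_cons.mpr ⟨?_, hc⟩
        intro y hy
        rw [hh] at hy
        cases hy; exact hab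
      · exact List.nodup_cons.mpr ⟨hmem, hn⟩
      · rw [← hl]
        cases l with
        | nil => simp at hh
        | cons x xs => rw [List.getLast?_cons_cons]

theorem mdrspp_trivial_yes {V : Type*} [Fintype V] [DecidableEq V]
    (D K : Finset (V × V)) (T : ℕ)
    (hD : IsDigraph D)
    (hK : ∀ k ∈ K, k.1 ≠ k.2 ∧ Relation.ReflTransGen (Adj D) k.1 k.2)
    (hT : (∀ v, outDeg D v ≤ T) ∨ (∀ v, (K.filter fun k => k.1 = v).card ≤ T)) :
    ∃ H : Finset (V × V), RSPPSolution D K T H := by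
  rcases hT with hT | hT
  · -- use H = D
    refine ⟨D, ?_, hT, ?_⟩
    · intro e he
      exact ⟨hD e he, Relation.ReflTransGen.single he⟩
    · intro k hk
      exact exists_nodup_chain (hK k hk).2
  · -- use H = K
    refine ⟨K, ?_, ?_, ?_⟩
    · intro e he
      exact ⟨(hK e he).1, (hK e he).2⟩
    · intro v; exact hT v
    · intro k hk
      refine ⟨[k.1, k.2], ?_, ?_, rfl, rfl⟩
      · simp [Adj, List.Chain']; exact hk
      · simp [(hK k hk).1]
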